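/- The entire function G(z) = ∑_{k=0}^∞ ω_k(a,p) (p z)^k / (p;p)_k, where ω_k(a,p) = ∑_{j=0}^k [k choose j]_p p^{-j(k-j)} a^j, satisfies the second-order q-difference equation G(z) − (1 − (a+1) z) G(p^{-1} z) + a p^{-1} z² G(p^{-2} z) = 0. -/

import Mathlib

open Finset

/-- `(p;p)_k = ∏_{i=1}^{k} (1 - pⁱ)`. -/
noncomputable def pPoch (p : ℝ) (k : ℕ) : ℝ := ∏ i ∈ range k, (1 - p ^ (i + 1))

/-- p-binomial (Gaussian) coefficient `[k choose j]_p`. -/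
noncomputable def pBinom (p : ℝ) (k j : ℕ) : ℝ :=
  pPoch p k / (pPoch p j * pPoch p (k - j))

namespace Aux12
noncomputable def Q (p : ℝ) (k : ℕ) : ℝ := ∏ i ∈ range k, (p ^ (i + 1) - 1)

variable {p : ℝ} (hp : 1 < p)

lemma pPoch_zero : pPoch p 0 = 1 := by simp [pPoch]
lemma pPoch_succ (k : ℕ) : pPoch p (k+1) = pPoch p k * (1 - p^(k+1)) :=
  prod_range_succ _ _

include hp

lemma Q_pos (k : ℕ) : 0 < Q p k := by
  refine prod_pos fun i _ => ?_
  have : 1 < p ^ (i+1) := one_lt_pow₀ hp (by omega)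
  linarith

omit hp in
lemma pPoch_eq (k : ℕ) : pPoch p k = (-1)^k * Q p k := by
  induction k with
  | zero => simp [pPoch, Q]
  | succ n ih =>
    rw [pPoch_succ, ih]
    rw [show Q p (n+1) = Q p n * (p^(n+1)-1) from prod_range_succ _ _]
    ring

lemma abs_pPoch (k : ℕ) : |pPoch p k| = Q p k := by
  rw [pPoch_eq _, abs_mul, abs_pow, abs_neg, abs_one, one_pow, one_mul,
    abs_of_pos (Q_pos hp k)]

lemma pPoch_ne_zero (k : ℕ) : pPoch p k ≠ 0 := by
  have := Q_pos hp k
  rw [pPoch_eq]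
  positivity

lemma pBinom_pos {k j : ℕ} (hj : j ≤ k) : 0 < pBinom p k j := by
  have h : pBinom p k j = Q p k / (Q p j * Q p (k - j)) := by
    rw [pBinom, pPoch_eq k, pPoch_eq j, pPoch_eq (k-j)]
    have : (-1:ℝ)^j * (-1:ℝ)^(k-j) = (-1)^k := by
      rw [← pow_add]; congr 1; omega
    rw [mul_mul_mul_comm, this,
      mul_div_mul_left _ _ (by positivity : ((-1:ℝ))^k ≠ 0)]
  rw [h]
  have := Q_pos hp k; have := Q_pos hp j; have := Q_pos hp (k-j)
  positivity

end Aux12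

namespace Aux12
variable {p : ℝ} (hp : 1 < p)
include hp

lemma one_sub_ppow_ne (m : ℕ) : (1:ℝ) - p ^ (m+1) ≠ 0 := by
  have : 1 < p ^ (m+1) := one_lt_pow₀ hp (by omega)
  intro h; linarith

lemma pascal1 {k j : ℕ} (hj : j < k) :
    pBinom p (k+1) (j+1) = pBinom p k j + p^(j+1) * pBinom p k (j+1) := by
  obtain ⟨d, rfl⟩ : ∃ d, k = j + d + 1 := ⟨k - j - 1, by omega⟩
  have h1 : j + d + 1 + 1 - (j + 1) = d + 1 := by omega
  have h2 : j + d + 1 - (j + 1) = d := by omega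
  have h3 : j + d + 1 - j = d + 1 := by omega
  rw [pBinom, pBinom, pBinom, h1, h2, h3]
  rw [pPoch_succ (j+d+1), pPoch_succ j, pPoch_succ d]
  rw [show p ^ (j+d+1+1) = p^(j+1) * p^(d+1) from by rw [← pow_add]; congr 1; omega]
  have hA := pPoch_ne_zero hp j
  have hB := pPoch_ne_zero hp d
  have f1 := one_sub_ppow_ne hp j
  have f2 := one_sub_ppow_ne hp d
  field_simp
  ring

lemma pascal2 {k j : ℕ} (hj : j < k) :
    pBinom p (k+1) (j+1) = p^(k-j) * pBinom p k j + pBinom p k (j+1) := by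
  obtain ⟨d, rfl⟩ : ∃ d, k = j + d + 1 := ⟨k - j - 1, by omega⟩
  have h1 : j + d + 1 + 1 - (j + 1) = d + 1 := by omega
  have h2 : j + d + 1 - (j + 1) = d := by omega
  have h3 : j + d + 1 - j = d + 1 := by omega
  rw [pBinom, pBinom, pBinom, h1, h2, h3]
  rw [pPoch_succ (j+d+1), pPoch_succ j, pPoch_succ d]
  rw [show p ^ (j+d+1+1) = p^(j+1) * p^(d+1) from by rw [← pow_add]; congr 1; omega]
  have hA := pPoch_ne_zero hp j
  have hB := pPoch_ne_zero hp d
  have f1 := one_sub_ppow_ne hp j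
  have f2 := one_sub_ppow_ne hp d
  field_simp
  ring

end Aux12

noncomputable def Aux12.bb (p : ℝ) (k j : ℕ) : ℝ :=
  pBinom p k j / p ^ (j * (k - j))

namespace Aux12
variable {p : ℝ} (hp : 1 < p)
include hp

lemma hp0 : p ≠ 0 := by linarith

lemma bb_zero (k : ℕ) : bb p k 0 = 1 := by
  have h : pBinom p k 0 = 1 := by
    rw [pBinom]
    simp only [Nat.sub_zero, pPoch_zero, one_mul]
    exact div_self (pPoch_ne_zero hp k)
  simp [bb, h]

lemma bb_self (k : ℕ) : bb p k k = 1 := by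
  have h : pBinom p k k = 1 := by
    rw [pBinom]
    simp only [Nat.sub_self, pPoch_zero, mul_one]
    exact div_self (pPoch_ne_zero hp k)
  simp [bb, h]

lemma bb_pos {k j : ℕ} (hj : j ≤ k) : 0 < bb p k j := by
  have h1 := pBinom_pos hp hj
  have h2 : (0:ℝ) < p ^ (j * (k - j)) := by positivity
  exact div_pos h1 h2

lemma bbpascal2 {k j : ℕ} (hj : j < k) :
    bb p (k+1) (j+1) = bb p k j + bb p k (j+1) / p ^ (j+1) := by
  have h0 := hp0 hp
  obtain ⟨d, rfl⟩ : ∃ d, k = j + d + 1 := ⟨k - j - 1, by omega⟩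
  rw [bb, bb, bb, pascal2 hp hj]
  rw [show j + d + 1 + 1 - (j + 1) = d + 1 from by omega,
    show j + d + 1 - (j + 1) = d from by omega,
    show j + d + 1 - j = d + 1 from by omega]
  rw [show (j+1) * (d+1) = j * (d+1) + (d+1) from by ring]
  field_simp
  ring

lemma bbpascal1 {k j : ℕ} (hj : j < k) :
    bb p (k+1) (j+1) = bb p k j / p ^ (k-j) + bb p k (j+1) := by
  have h0 := hp0 hp
  obtain ⟨d, rfl⟩ : ∃ d, k = j + d + 1 := ⟨k - j - 1, by omega⟩
  rw [bb, bb, bb, pascal1 hp hj]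
  rw [show j + d + 1 + 1 - (j + 1) = d + 1 from by omega,
    show j + d + 1 - (j + 1) = d from by omega,
    show j + d + 1 - j = d + 1 from by omega]
  rw [show (j+1) * (d+1) = j * (d+1) + (d+1) from by ring]
  field_simp
  ring

end Aux12

noncomputable def Aux12.W (p a : ℝ) (k : ℕ) : ℝ :=
  ∑ j ∈ range (k+1), Aux12.bb p k j * a ^ j

noncomputable def Aux12.Aseq (p a : ℝ) (n : ℕ) : ℝ :=
  ∑ j ∈ range (n+1), Aux12.bb p n j * a ^ j / p ^ j

namespace Aux12
variable {p a : ℝ} (hp : 1 < p)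
include hp

lemma W_zero : W p a 0 = 1 := by
  simp [W, bb_zero hp]

lemma W_one : W p a 1 = 1 + a := by
  rw [W, sum_range_succ, sum_range_succ, sum_range_zero, bb_zero hp, bb_self hp]
  ring

lemma W_pos (ha : 0 < a) (k : ℕ) : 0 < W p a k := by
  refine sum_pos (fun j hj => ?_) ⟨0, by simp⟩
  have := bb_pos hp (by have := mem_range.mp hj; omega : j ≤ k)
  positivity

lemma W_succ (n : ℕ) : W p a (n+1) = a * W p a n + Aseq p a n := by
  have h0 := hp0 hp
  have e1 : W p a (n+1)
      = (∑ j ∈ range n, bb p (n+1) (j+1) * a^(j+1)) + a^(n+1) + 1 := by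
    rw [W, sum_range_succ', sum_range_succ, bb_zero hp, bb_self hp]
    ring
  have e2 : ∑ j ∈ range n, bb p (n+1) (j+1) * a^(j+1)
      = ∑ j ∈ range n, (bb p n j * a^(j+1) + bb p n (j+1) * a^(j+1) / p ^ (j+1)) := by
    refine sum_congr rfl fun j hj => ?_
    rw [bbpascal2 hp (mem_range.mp hj)]
    ring
  have e3 : W p a n = (∑ j ∈ range n, bb p n j * a^j) + a^n := by
    rw [W, sum_range_succ, bb_self hp]; ring
  have e4 : Aseq p a n
      = (∑ j ∈ range n, bb p n (j+1) * a^(j+1) / p ^ (j+1)) + 1 := by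
    rw [Aseq, sum_range_succ', bb_zero hp]
    simp
  have e5 : ∑ j ∈ range n, bb p n j * a^(j+1)
      = a * ∑ j ∈ range n, bb p n j * a^j := by
    rw [mul_sum]; exact sum_congr rfl fun j _ => by ring
  rw [e1, e2, sum_add_distrib, e5, e3, e4]
  ring

lemma Aseq_succ (n : ℕ) :
    Aseq p a (n+1) = Aseq p a n + a * W p a n / p ^ (n+1) := by
  have h0 := hp0 hp
  have e1 : Aseq p a (n+1)
      = (∑ j ∈ range n, bb p (n+1) (j+1) * a^(j+1) / p ^ (j+1))
        + a^(n+1) / p^(n+1) + 1 := by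
    rw [Aseq, sum_range_succ', sum_range_succ, bb_zero hp, bb_self hp]
    ring
  have e2 : ∑ j ∈ range n, bb p (n+1) (j+1) * a^(j+1) / p ^ (j+1)
      = ∑ j ∈ range n, (bb p n j * a^(j+1) / p ^ (n+1)
          + bb p n (j+1) * a^(j+1) / p ^ (j+1)) := by
    refine sum_congr rfl fun j hj => ?_
    have hjn := mem_range.mp hj
    rw [bbpascal1 hp hjn]
    rw [show n - j = n + 1 - (j + 1) from by omega]
    rw [show (p:ℝ) ^ (n+1) = p ^ (j+1) * p ^ (n + 1 - (j+1)) from by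
      rw [← pow_add]; congr 1; omega]
    field_simp
  have e3 : W p a n = (∑ j ∈ range n, bb p n j * a^j) + a^n := by
    rw [W, sum_range_succ, bb_self hp]; ring
  have e4 : Aseq p a n
      = (∑ j ∈ range n, bb p n (j+1) * a^(j+1) / p ^ (j+1)) + 1 := by
    rw [Aseq, sum_range_succ', bb_zero hp]
    simp
  have e5 : ∑ j ∈ range n, bb p n j * a^(j+1) / p ^ (n+1)
      = (a / p ^ (n+1)) * ∑ j ∈ range n, bb p n j * a^j := by
    rw [mul_sum]; exact sum_congr rfl fun j _ => by ring
  rw [e1, e2, sum_add_distrib, e5, e3, e4]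
  field_simp
  ring

lemma W_rec (n : ℕ) :
    W p a (n+2) = (1+a) * W p a (n+1) - a * (1 - (p ^ (n+1))⁻¹) * W p a n := by
  have h1 := W_succ (a := a) hp (n+1)
  have h2 := Aseq_succ (a := a) hp n
  have h3 := W_succ (a := a) hp n
  have h0 := hp0 hp
  rw [h1, h2]
  have : Aseq p a n = W p a (n+1) - a * W p a n := by linarith
  rw [this]
  field_simp
  ring

lemma W_step (ha : 0 < a) (k : ℕ) : W p a (k+1) ≤ (1+a) * W p a k := by
  cases k with
  | zero => rw [W_one hp, W_zero hp]; exact le_of_eq (by ring)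
  | succ n =>
    rw [W_rec hp n]
    have hw := W_pos hp ha n
    have hinv : (p ^ (n+1))⁻¹ ≤ 1 := by
      rw [inv_le_one_iff₀]
      right
      exact one_le_pow₀ (by linarith)
    have hnn : 0 ≤ a * (1 - (p ^ (n+1))⁻¹) * W p a n :=
      mul_nonneg (mul_nonneg ha.le (by linarith)) hw.le
    linarith

end Aux12

noncomputable def Aux12.cc (p : ℝ) (ω : ℕ → ℝ) (k : ℕ) : ℂ :=
  ((ω k : ℝ) : ℂ) * (p:ℂ)^k / ((pPoch p k : ℝ) : ℂ)

namespace Aux12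
open Filter

variable {p a : ℝ} (hp : 1 < p)
include hp

lemma Q_succ (k : ℕ) : Q p (k+1) = Q p k * (p^(k+1) - 1) := prod_range_succ _ _

lemma norm_cc_mul (ha : 0 < a) {ω : ℕ → ℝ} (hωW : ∀ k, ω k = W p a k)
    (w : ℂ) (m : ℕ) :
    ‖cc p ω m * w ^ m‖ = W p a m * p ^ m * ‖w‖ ^ m / Q p m := by
  have h1 : |ω m| = W p a m := by rw [hωW, abs_of_pos (W_pos hp ha m)]
  have h2 : |p| = p := abs_of_pos (by linarith)
  simp only [cc, norm_mul, norm_div, norm_pow, Complex.norm_real,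
    Real.norm_eq_abs, abs_pPoch hp, h1, h2]
  ring

lemma summable_cc (ha : 0 < a) {ω : ℕ → ℝ} (hωW : ∀ k, ω k = W p a k)
    (w : ℂ) : Summable (fun k => cc p ω k * w ^ k) := by
  have hp0' : (0:ℝ) < p := by linarith
  apply summable_of_ratio_norm_eventually_le (r := 1/2) (by norm_num)
  have htend : Tendsto (fun k : ℕ => p ^ (k+1)) atTop atTop :=
    (tendsto_pow_atTop_atTop_of_one_lt hp).comp (tendsto_add_atTop_nat 1)
  filter_upwards [htend.eventually_ge_atTop (2*(1+a)*p*‖w‖ + 1)] with k hk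
  rw [norm_cc_mul hp ha hωW, norm_cc_mul hp ha hωW]
  have hQpos := Q_pos hp k
  have hppos : (0:ℝ) < p ^ (k+1) - 1 := by
    have : 1 < p ^ (k+1) := one_lt_pow₀ hp (by omega)
    linarith
  have hWpos := W_pos (a := a) hp ha k
  have hW1pos := W_pos (a := a) hp ha (k+1)
  rw [Q_succ hp]
  calc W p a (k+1) * p ^ (k+1) * ‖w‖ ^ (k+1) / (Q p k * (p^(k+1) - 1))
      ≤ ((1+a) * W p a k) * p ^ (k+1) * ‖w‖ ^ (k+1) / (Q p k * (p^(k+1) - 1)) := by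
        gcongr
        exact W_step hp ha k
    _ = (W p a k * p ^ k * ‖w‖ ^ k / Q p k) * ((1+a) * p * ‖w‖ / (p^(k+1) - 1)) := by
        rw [pow_succ p k, pow_succ ‖w‖ k]
        field_simp
        try ring
    _ ≤ (W p a k * p ^ k * ‖w‖ ^ k / Q p k) * (1/2) := by
        refine mul_le_mul_of_nonneg_left ?_ (by positivity)
        rw [div_le_iff₀ hppos]
        nlinarith [norm_nonneg w]
    _ = 1/2 * (W p a k * p ^ k * ‖w‖ ^ k / Q p k) := by ring

lemma ppow_ne_one (m : ℕ) : (1:ℂ) - (p:ℂ)^(m+1) ≠ 0 := by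
  have h := one_sub_ppow_ne hp m
  intro hcon
  apply h
  have : ((1 - p^(m+1) : ℝ) : ℂ) = 0 := by push_cast; exact hcon
  exact_mod_cast this

lemma pPochC_ne (m : ℕ) : ((pPoch p m : ℝ) : ℂ) ≠ 0 :=
  Complex.ofReal_ne_zero.mpr (pPoch_ne_zero hp m)

lemma hpC : (p:ℂ) ≠ 0 :=
  Complex.ofReal_ne_zero.mpr (by linarith)

lemma key1 (ha : 0 < a) {ω : ℕ → ℝ} (hωW : ∀ k, ω k = W p a k) (z : ℂ) :
    (cc p ω 1 * z ^ 1 - cc p ω 1 * (((p:ℂ)⁻¹) ^ 1 * z ^ 1))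
      + ((a:ℂ)+1) * z * (cc p ω 0 * (((p:ℂ)⁻¹) ^ 0 * z ^ 0)) = 0 := by
  have h0 : (p:ℂ) ≠ 0 := hpC hp
  have hω1 : ((ω 1 : ℝ) : ℂ) = 1 + (a:ℂ) := by
    rw [hωW, W_one hp]; push_cast; ring
  have hω0 : ((ω 0 : ℝ) : ℂ) = 1 := by rw [hωW, W_zero hp]; push_cast; ring
  have hP1 : ((pPoch p 1 : ℝ) : ℂ) = 1 - (p:ℂ) := by
    rw [pPoch_succ, pPoch_zero]; push_cast; ring
  have hP0 : ((pPoch p 0 : ℝ) : ℂ) = 1 := by rw [pPoch_zero]; push_cast; ring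
  have hne : (1:ℂ) - (p:ℂ) ≠ 0 := by
    have := ppow_ne_one hp 0
    simpa using this
  rw [cc, cc, hω1, hω0, hP1, hP0]
  field_simp
  ring

lemma key2 (ha : 0 < a) {ω : ℕ → ℝ} (hωW : ∀ k, ω k = W p a k) (z : ℂ) (k : ℕ) :
    (cc p ω (k+2) * z ^ (k+2) - cc p ω (k+2) * (((p:ℂ)⁻¹) ^ (k+2) * z ^ (k+2)))
      + ((a:ℂ)+1) * z * (cc p ω (k+1) * (((p:ℂ)⁻¹) ^ (k+1) * z ^ (k+1)))
      + (a:ℂ) * (p:ℂ)⁻¹ * z ^ 2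
        * (cc p ω k * (((p:ℂ)⁻¹) ^ k * ((p:ℂ)⁻¹) ^ k * z ^ k)) = 0 := by
  have h0 : (p:ℂ) ≠ 0 := hpC hp
  have hrec : ((ω (k+2) : ℝ) : ℂ)
      = (1+(a:ℂ)) * ((ω (k+1) : ℝ):ℂ)
        - (a:ℂ) * (1 - ((p:ℂ)^(k+1))⁻¹) * ((ω k : ℝ):ℂ) := by
    rw [hωW (k+2), hωW (k+1), hωW k, W_rec hp]
    push_cast
    ring
  have hP2 : ((pPoch p (k+2) : ℝ) : ℂ)
      = ((pPoch p (k+1) : ℝ) : ℂ) * (1 - (p:ℂ)^(k+2)) := by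
    rw [pPoch_succ (k+1)]; push_cast; ring
  have hP1 : ((pPoch p (k+1) : ℝ) : ℂ)
      = ((pPoch p k : ℝ) : ℂ) * (1 - (p:ℂ)^(k+1)) := by
    rw [pPoch_succ k]; push_cast; ring
  have hneP := pPochC_ne hp k
  rw [cc, cc, cc, hP2, hP1]
  rw [inv_pow, inv_pow, inv_pow]
  rw [show ((p:ℂ))^(k+2) = (p:ℂ)^k * p^2 from by ring,
    show ((p:ℂ))^(k+1) = (p:ℂ)^k * p from by ring,
    show z^(k+2) = z^k * z^2 from by ring,
    show z^(k+1) = z^k * z from by ring]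
  have ht : (p:ℂ)^k ≠ 0 := pow_ne_zero _ h0
  have hA : (1:ℂ) - (p:ℂ)^k * p ≠ 0 := by
    have := ppow_ne_one hp k
    rwa [show ((p:ℂ))^(k+1) = (p:ℂ)^k * p from by ring] at this
  have hB : (1:ℂ) - (p:ℂ)^k * p^2 ≠ 0 := by
    have : (1:ℂ) - (p:ℂ)^(k+2) ≠ 0 := ppow_ne_one hp (k+1)
    rwa [show ((p:ℂ))^(k+2) = (p:ℂ)^k * p^2 from by ring] at this
  generalize hgP : ((pPoch p k : ℝ):ℂ) = P at hneP ⊢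
  generalize hgt : (p:ℂ)^k = t at ht hA hB hrec ⊢
  generalize hgs : z^k = s
  have htp : t * (p:ℂ) ≠ 0 := mul_ne_zero ht h0
  have hPA : P * (1 - t * (p:ℂ)) ≠ 0 := mul_ne_zero hneP hA
  have hPAB : P * (1 - t * (p:ℂ)) * (1 - t * (p:ℂ)^2) ≠ 0 := mul_ne_zero hPA hB
  have hDne : P * (1 - t * (p:ℂ)) * (1 - t * (p:ℂ)^2) * (t*(p:ℂ)) ≠ 0 :=
    mul_ne_zero hPAB htp
  have hrec2 : ((ω (k+2) : ℝ) : ℂ)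
      = ((1+(a:ℂ)) * ((ω (k+1):ℝ):ℂ) * (t*(p:ℂ)) - (a:ℂ)*(t*(p:ℂ)-1) * ((ω k:ℝ):ℂ))
          / (t*(p:ℂ)) := by
    rw [eq_div_iff htp, hrec]
    have : ((p:ℂ)^(k+1))⁻¹ = (t * (p:ℂ))⁻¹ := by
      rw [show ((p:ℂ))^(k+1) = (p:ℂ)^k * p from by ring, hgt]
    rw [this]
    field_simp
  rw [hrec2]
  set M : ℂ := (1+(a:ℂ)) * ((ω (k+1):ℝ):ℂ) * (t*(p:ℂ)) - (a:ℂ)*(t*(p:ℂ)-1) * ((ω k:ℝ):ℂ)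
    with hM
  set D : ℂ := P * (1 - t * (p:ℂ)) * (1 - t * (p:ℂ)^2) * (t*(p:ℂ)) with hDdef
  have e1 : M / (t*(p:ℂ)) * (t * (p:ℂ) ^ 2) / (P * (1 - t * (p:ℂ)) * (1 - t * (p:ℂ) ^ 2))
        * (s * z ^ 2)
      = (M * (p:ℂ) * s * z^2 * (t*(p:ℂ))) / D := by
    rw [hDdef]; field_simp
  have e2 : M / (t*(p:ℂ)) * (t * (p:ℂ) ^ 2) / (P * (1 - t * (p:ℂ)) * (1 - t * (p:ℂ) ^ 2))
        * ((t * (p:ℂ) ^ 2)⁻¹ * (s * z ^ 2))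
      = (M * s * z^2) / D := by
    rw [hDdef]; field_simp
  have e3 : ((a:ℂ) + 1) * z * (((ω (k + 1):ℝ):ℂ) * (t * (p:ℂ)) / (P * (1 - t * (p:ℂ)))
        * ((t * (p:ℂ))⁻¹ * (s * z)))
      = (((a:ℂ)+1) * ((ω (k+1):ℝ):ℂ) * s * z^2 * (1 - t*(p:ℂ)^2) * (t*(p:ℂ))) / D := by
    rw [hDdef]; field_simp
  have e4 : (a:ℂ) * ((p:ℂ))⁻¹ * z ^ 2 * (((ω k:ℝ):ℂ) * t / P * (t⁻¹ * t⁻¹ * s))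
      = ((a:ℂ) * z^2 * ((ω k:ℝ):ℂ) * s * (1 - t*(p:ℂ)) * (1 - t*(p:ℂ)^2)) / D := by
    rw [hDdef, eq_div_iff hDne]; field_simp; ring
  rw [e1, e2, e3, e4, div_sub_div_same, ← add_div, ← add_div]
  rw [show M * (p:ℂ) * s * z^2 * (t*(p:ℂ)) - M * s * z^2
        + ((a:ℂ)+1) * ((ω (k+1):ℝ):ℂ) * s * z^2 * (1 - t*(p:ℂ)^2) * (t*(p:ℂ))
        + (a:ℂ) * z^2 * ((ω k:ℝ):ℂ) * s * (1 - t*(p:ℂ)) * (1 - t*(p:ℂ)^2) = 0 from by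
      rw [hM]; ring,
    zero_div]

end Aux12

namespace Aux12
variable {p a : ℝ} (hp : 1 < p)
include hp

lemma W_formula (k : ℕ) :
    W p a k = ∑ j ∈ range (k + 1), pBinom p k j * p ^ (-(j * (k - j) : ℤ)) * a ^ j := by
  rw [W]
  refine sum_congr rfl fun j hj => ?_
  have hjk : j ≤ k := by have := mem_range.mp hj; omega
  have e : (p:ℝ) ^ (-(j * (k - j) : ℤ)) = (p ^ (j*(k-j)))⁻¹ := by
    rw [show (-(j * (k - j) : ℤ)) = -((j*(k-j) : ℕ) : ℤ) from by
        push_cast [Nat.cast_sub hjk]; ring,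
      zpow_neg, zpow_natCast]
  rw [e, bb, div_eq_mul_inv]

end Aux12

noncomputable def Aux12.shift1 (u : ℕ → ℂ) : ℕ → ℂ := fun n => match n with
  | 0 => 0 | m+1 => u m

noncomputable def Aux12.shift2 (v : ℕ → ℂ) : ℕ → ℂ := fun n => match n with
  | 0 => 0 | 1 => 0 | m+2 => v m

example (u : ℕ → ℂ) (n : ℕ) : Aux12.shift1 u (n+1) = u n := rfl
example (v : ℕ → ℂ) (n : ℕ) : Aux12.shift2 v (n+2) = v n := rfl

/-- The entire function `G(z) = ∑ₖ ω_k(a,p)(pz)ᵏ/(p;p)ₖ` satisfies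
`G(z) − (1−(a+1)z) G(p⁻¹z) + a p⁻¹ z² G(p⁻²z) = 0`. -/
theorem stmt12 (a p : ℝ) (ha : 0 < a) (hp : 1 < p)
    (ω : ℕ → ℝ)
    (hω : ∀ k : ℕ, ω k = ∑ j ∈ range (k + 1),
      pBinom p k j * p ^ (-(j * (k - j) : ℤ)) * a ^ j)
    (G : ℂ → ℂ)
    (hG : ∀ z : ℂ, G z = ∑' k : ℕ, (ω k : ℂ) * ((p : ℂ) * z) ^ k / (pPoch p k : ℂ))
    (z : ℂ) :
    G z - (1 - ((a : ℂ) + 1) * z) * G ((p : ℂ)⁻¹ * z)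
      + (a : ℂ) * (p : ℂ)⁻¹ * z ^ 2 * G ((p : ℂ)⁻¹ ^ 2 * z) = 0 := by
  have hωW : ∀ k, ω k = Aux12.W p a k :=
    fun k => (hω k).trans (Aux12.W_formula hp k).symm
  have h0 : (p:ℂ) ≠ 0 := Aux12.hpC hp
  have hsum : ∀ w : ℂ, Summable (fun k => Aux12.cc p ω k * w ^ k) :=
    fun w => Aux12.summable_cc hp ha hωW w
  -- the three series representations
  have hG1 : G z = ∑' k : ℕ, Aux12.cc p ω k * z ^ k := by
    rw [hG]
    refine tsum_congr fun k => ?_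
    rw [Aux12.cc, mul_pow]
    ring
  have hG2 : G ((p:ℂ)⁻¹ * z)
      = ∑' k : ℕ, Aux12.cc p ω k * (((p:ℂ)⁻¹) ^ k * z ^ k) := by
    rw [hG]
    refine tsum_congr fun k => ?_
    have hP := Aux12.pPochC_ne hp k
    rw [show (p:ℂ) * ((p:ℂ)⁻¹ * z) = z from by field_simp, Aux12.cc, inv_pow]
    field_simp
  have hG3 : G ((p:ℂ)⁻¹ ^ 2 * z)
      = ∑' k : ℕ, Aux12.cc p ω k
          * (((p:ℂ)⁻¹) ^ k * ((p:ℂ)⁻¹) ^ k * z ^ k) := by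
    rw [hG]
    refine tsum_congr fun k => ?_
    have hP := Aux12.pPochC_ne hp k
    rw [show (p:ℂ) * ((p:ℂ)⁻¹ ^ 2 * z) = (p:ℂ)⁻¹ * z from by
        field_simp,
      mul_pow, Aux12.cc, inv_pow]
    field_simp
  rw [hG1, hG2, hG3]
  -- summability of the pieces
  have h1 : Summable (fun k => Aux12.cc p ω k * z ^ k) := hsum z
  have h2 : Summable (fun k => Aux12.cc p ω k * (((p:ℂ)⁻¹) ^ k * z ^ k)) :=
    (hsum ((p:ℂ)⁻¹ * z)).congr fun k => by rw [mul_pow]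
  have h3 : Summable (fun k => Aux12.cc p ω k
      * (((p:ℂ)⁻¹) ^ k * ((p:ℂ)⁻¹) ^ k * z ^ k)) :=
    (hsum ((p:ℂ)⁻¹ * ((p:ℂ)⁻¹ * z))).congr fun k => by
      rw [mul_pow, mul_pow]; ring
  rw [← tsum_mul_left, ← tsum_mul_left]
  rw [← Summable.tsum_sub h1 (h2.mul_left _)]
  rw [← Summable.tsum_add ((h1.sub (h2.mul_left _))) (h3.mul_left _)]
  -- reorganize the summand
  set u : ℕ → ℂ := fun k => ((a:ℂ)+1) * z
      * (Aux12.cc p ω k * (((p:ℂ)⁻¹) ^ k * z ^ k)) with hu_def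
  set v : ℕ → ℂ := fun k => (a:ℂ) * (p:ℂ)⁻¹ * z ^ 2
      * (Aux12.cc p ω k * (((p:ℂ)⁻¹) ^ k * ((p:ℂ)⁻¹) ^ k * z ^ k)) with hv_def
  set f : ℕ → ℂ := fun k => Aux12.cc p ω k * z ^ k
      - Aux12.cc p ω k * (((p:ℂ)⁻¹) ^ k * z ^ k) with hf_def
  have hf : Summable f := h1.sub h2
  have hu : Summable u := h2.mul_left _
  have hv : Summable v := h3.mul_left _
  have step1 : (∑' k : ℕ, (Aux12.cc p ω k * z ^ k
        - (1 - ((a:ℂ) + 1) * z) * (Aux12.cc p ω k * (((p:ℂ)⁻¹) ^ k * z ^ k))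
        + (a:ℂ) * (p:ℂ)⁻¹ * z ^ 2
          * (Aux12.cc p ω k * (((p:ℂ)⁻¹) ^ k * ((p:ℂ)⁻¹) ^ k * z ^ k))))
      = ∑' k : ℕ, (f k + (u k + v k)) := by
    refine tsum_congr fun k => ?_
    simp only [hu_def, hv_def, hf_def]
    ring
  rw [step1]
  rw [Summable.tsum_add hf (hu.add hv), Summable.tsum_add hu hv]
  -- shift the index on u and v
  have hU : Summable (Aux12.shift1 u) := (summable_nat_add_iff 1).mp hu
  have hV : Summable (Aux12.shift2 v) := (summable_nat_add_iff 2).mp hv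
  have hV1 : Summable (fun k => Aux12.shift2 v (k+1)) :=
    (summable_nat_add_iff 1).mpr hV
  have hUt : ∑' k : ℕ, Aux12.shift1 u k = ∑' k : ℕ, u k := by
    rw [Summable.tsum_eq_zero_add hU]
    show (0:ℂ) + ∑' k : ℕ, u k = ∑' k : ℕ, u k
    rw [zero_add]
  have hVt : ∑' k : ℕ, Aux12.shift2 v k = ∑' k : ℕ, v k := by
    rw [Summable.tsum_eq_zero_add hV, Summable.tsum_eq_zero_add hV1]
    show (0:ℂ) + ((0:ℂ) + ∑' k : ℕ, v k) = ∑' k : ℕ, v k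
    rw [zero_add, zero_add]
  rw [← hUt, ← hVt]
  rw [← Summable.tsum_add hU hV, ← Summable.tsum_add hf (hU.add hV)]
  have hzero : ∀ k : ℕ, f k + (Aux12.shift1 u k + Aux12.shift2 v k) = 0 := by
    intro k
    match k with
    | 0 =>
      show f 0 + (0 + 0) = 0
      simp only [hf_def]
      simp
    | 1 =>
      show f 1 + (u 0 + 0) = 0
      rw [add_zero]
      have := Aux12.key1 hp ha hωW z
      simp only [hf_def, hu_def]
      exact this
    | (k+2) =>
      show f (k+2) + (u (k+1) + v k) = 0
      have := Aux12.key2 hp ha hωW z k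
      simp only [hf_def, hu_def, hv_def]
      rw [← add_assoc] at *
      exact this
  rw [tsum_congr hzero, tsum_zero]
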